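/- Let F_1,...,F_n be marginal distributions on the nonnegative reals. For every subset S ⊆ {1,...,n} of the items, every pricing p, and every compatible joint distribution F, the contribution to the expected revenue R(p,F) coming from sales of items in S (i.e., E_{v~F}[p_{j*(v,p)} · 1{j*(v,p) ∈ S}], where j*(v,p) is the purchased item) is at most Σ_{i∈S} Mye(F_i). -/

import Mathlib

open MeasureTheory
open scoped ENNReal NNReal

noncomputable section

/-- A buyer's purchase rule for `n` items: given a valuation profile and a vector of item prices
(in `[0,∞]`), `choose` returns the purchased item (or `none` if nothing is purchased).
The axioms say: a purchased item has a finite price and yields nonnegative utility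
(`feasible`), the purchased item maximizes utility among all items (`optimal`), and the buyer
does purchase whenever some item yields nonnegative utility (`active`). Ties among
utility-maximizing items are broken according to the (fixed) rule embodied by `choose`. -/
structure BuyerRule (n : ℕ) where
  choose : (Fin n → ℝ) → (Fin n → ℝ≥0∞) → Option (Fin n)
  feasible : ∀ v p j, choose v p = some j → p j ≠ ⊤ ∧ (p j).toReal ≤ v j
  optimal : ∀ v p j k, choose v p = some j → p k ≠ ⊤ →
      v k - (p k).toReal ≤ v j - (p j).toReal
  active : ∀ v p, (∃ k, p k ≠ ⊤ ∧ (p k).toReal ≤ v k) → (choose v p).isSome = true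

/-- The seller's revenue from valuation profile `v` under pricing `p`. -/
def BuyerRule.revenue {n : ℕ} (B : BuyerRule n) (p : Fin n → ℝ≥0∞) (v : Fin n → ℝ) : ℝ≥0∞ :=
  (B.choose v p).elim 0 (fun j => p j)

/-- A joint distribution `F` on valuation profiles is compatible with the marginals `marg`
if it is a probability measure whose `j`-th one-dimensional marginal is `marg j` for every `j`. -/
def Compatible {n : ℕ} (marg : Fin n → Measure ℝ) (F : Measure (Fin n → ℝ)) : Prop :=
  IsProbabilityMeasure F ∧ ∀ j, F.map (fun v => v j) = marg j

/-- `R(p,F)`: the expected revenue of pricing `p` under joint distribution `F`. -/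
def expRev {n : ℕ} (B : BuyerRule n) (p : Fin n → ℝ≥0∞) (F : Measure (Fin n → ℝ)) : ℝ≥0∞ :=
  ∫⁻ v, B.revenue p v ∂F

/-- `R(p)`: the robust revenue guarantee of `p`, the infimum of `R(p,F)` over compatible `F`. -/
def robustRev {n : ℕ} (B : BuyerRule n) (marg : Fin n → Measure ℝ) (p : Fin n → ℝ≥0∞) : ℝ≥0∞ :=
  ⨅ (F : Measure (Fin n → ℝ)) (_ : Compatible marg F), expRev B p F

/-- `R*`: the optimal robust revenue guarantee over all pricings. -/
def optRobust {n : ℕ} (B : BuyerRule n) (marg : Fin n → Measure ℝ) : ℝ≥0∞ :=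
  ⨆ p : Fin n → ℝ≥0∞, robustRev B marg p

/-- The Myerson (monopoly) revenue of a single-item distribution `μ`:
`Mye(μ) = sup_{x ≥ 0} x · Pr_{v ~ μ}[v ≥ x]`. -/
def Mye (μ : Measure ℝ) : ℝ≥0∞ :=
  ⨆ x : ℝ≥0, (x : ℝ≥0∞) * μ {v : ℝ | (x : ℝ) ≤ v}

/-- For every subset `S` of the items, every pricing `p`, and every compatible
joint distribution `F`, the contribution to the expected revenue `R(p,F)` coming from sales of
items in `S` is at most `Σ_{i ∈ S} Mye(F_i)`. -/
theorem revenue_contribution_le_sum_myerson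
    (n : ℕ) (B : BuyerRule n) (marg : Fin n → Measure ℝ)
    (hprob : ∀ j, IsProbabilityMeasure (marg j))
    (hnonneg : ∀ j, marg j (Set.Iio 0) = 0)
    (S : Finset (Fin n)) (p : Fin n → ℝ≥0∞)
    (F : Measure (Fin n → ℝ)) (hF : Compatible marg F) :
    ∫⁻ v, (B.choose v p).elim 0 (fun j => if j ∈ S then p j else 0) ∂F ≤
      ∑ i ∈ S, Mye (marg i) := by
  obtain ⟨hFp, hmarg⟩ := hF
  set g : Fin n → (Fin n → ℝ) → ℝ≥0∞ := fun i =>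
    Set.indicator {w : Fin n → ℝ | (p i).toReal ≤ w i}
      (fun _ => if p i = ⊤ then 0 else p i) with hg
  have hmono : ∀ v, (B.choose v p).elim 0 (fun j => if j ∈ S then p j else 0) ≤
      ∑ i ∈ S, g i v := by
    intro v
    cases h : B.choose v p with
    | none => simp
    | some j =>
      simp only [Option.elim]
      by_cases hj : j ∈ S
      · simp only [hj, if_pos]
        obtain ⟨hne, hle⟩ := B.feasible v p j h
        have hval : g j v = p j := by
          rw [hg]
          simp only []
          rw [Set.indicator_of_mem (show v ∈ {w : Fin n → ℝ | (p j).toReal ≤ w j} from hle),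
            if_neg hne]
        calc p j = g j v := hval.symm
          _ ≤ ∑ i ∈ S, g i v :=
            Finset.single_le_sum (f := fun i => g i v) (fun i _ => zero_le) hj
      · simp [hj]
  have hms : ∀ i : Fin n, MeasurableSet {w : Fin n → ℝ | (p i).toReal ≤ w i} := by
    intro i
    exact measurableSet_le measurable_const (measurable_pi_apply i)
  calc ∫⁻ v, (B.choose v p).elim 0 (fun j => if j ∈ S then p j else 0) ∂F
      ≤ ∫⁻ v, ∑ i ∈ S, g i v ∂F := lintegral_mono hmono
    _ = ∑ i ∈ S, ∫⁻ v, g i v ∂F := by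
        refine lintegral_finset_sum' S fun i _ => ?_
        exact (((measurable_const).indicator (hms i)) : Measurable (g i)).aemeasurable
    _ ≤ ∑ i ∈ S, Mye (marg i) := by
        refine Finset.sum_le_sum fun i _ => ?_
        rw [hg]
        simp only []
        rw [lintegral_indicator_const (hms i)]
        by_cases htop : p i = ⊤
        · simp [htop]
        · rw [if_neg htop]
          have hFset : F {w : Fin n → ℝ | (p i).toReal ≤ w i}
              = marg i {v : ℝ | ((p i).toNNReal : ℝ) ≤ v} := by
            rw [← hmarg i, Measure.map_apply (measurable_pi_apply i)
              (measurableSet_Ici : MeasurableSet (Set.Ici (((p i).toNNReal : ℝ))))]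
            rfl
          rw [hFset]
          have : p i = ((p i).toNNReal : ℝ≥0∞) := (ENNReal.coe_toNNReal htop).symm
          rw [this]
          exact le_iSup (fun x : ℝ≥0 => (x : ℝ≥0∞) * marg i {v : ℝ | (x : ℝ) ≤ v})
            (p i).toNNReal
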